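/- Let p be a prime. Then M_p ⊆ {1, 2, 6, 42, 1806} ∪ p · 𝒲; that is, every positive integer n with S_n(n) ≡ p (mod n) either belongs to {1, 2, 6, 42, 1806}, or is divisible by p with n/p a weak primary pseudoperfect number. -/

import Mathlib

/-- `S k n = ∑_{i=1}^{n} i^k`. -/
def S (k n : ℕ) : ℕ := ∑ i ∈ Finset.Icc 1 n, i ^ k


def T (n : ℕ) : ℕ := ∑ q ∈ n.primeFactors.filter (fun q => (q - 1) ∣ n), n / q

lemma sum_range_mul {R : Type*} [AddCommMonoid R] (f : ℕ → R) (M : ℕ)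
    (hf : ∀ i, f (i + M) = f i) (c : ℕ) :
    ∑ i ∈ Finset.range (c * M), f i = c • ∑ i ∈ Finset.range M, f i := by
  induction c with
  | zero => simp
  | succ c ih =>
    have h : (c + 1) * M = M + c * M := by ring
    rw [h, Finset.range_eq_Ico, ← Finset.sum_Ico_consecutive _ (Nat.zero_le M) (Nat.le_add_right M (c*M))]
    have h2 : ∑ i ∈ Finset.Ico M (M + c * M), f i = ∑ i ∈ Finset.range (c * M), f i := by
      rw [Finset.sum_Ico_eq_sum_range]
      simp only [Nat.add_sub_cancel_left]
      refine Finset.sum_congr rfl fun i _ => ?_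
      rw [Nat.add_comm M i, hf i]
    rw [h2, ih, ← Finset.range_eq_Ico, succ_nsmul']

lemma S_cast (n N : ℕ) (M : ℕ) [NeZero M] :
    ((S n N : ℕ) : ZMod M) = ∑ i ∈ Finset.range N, ((i + 1 : ℕ) : ZMod M) ^ n := by
  unfold S
  push_cast
  rw [← Finset.Ico_add_one_right_eq_Icc, Finset.sum_Ico_eq_sum_range]
  refine Finset.sum_congr rfl fun i _ => ?_
  rw [Nat.add_comm 1 i]
  push_cast
  ring

lemma keyLocal (n ℓ k : ℕ) (hℓ : ℓ.Prime) (hk : 0 < k) (hM : ℓ ^ k ∣ n) (hn : 0 < n) :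
    ℓ ^ k ∣ S n n + T n := by
  set M := ℓ ^ k with hMdef
  haveI : NeZero M := ⟨pow_ne_zero k hℓ.pos.ne'⟩
  have hMn : M ≤ n := Nat.le_of_dvd hn hM
  have hkn : k ≤ n := le_trans (le_of_lt (Nat.lt_of_lt_of_le (Nat.lt_two_pow_self (n := k))
    (Nat.pow_le_pow_left hℓ.two_le k))) hMn
  rw [← ZMod.natCast_eq_zero_iff]
  push_cast
  -- Step A : periodicity
  have hS : ((S n n : ℕ) : ZMod M) = (n / M : ℕ) * ((S n M : ℕ) : ZMod M) := by
    rw [S_cast, S_cast]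
    have hper : ∀ i, ((i + M + 1 : ℕ) : ZMod M) ^ n = ((i + 1 : ℕ) : ZMod M) ^ n := by
      intro i
      have : ((i + M + 1 : ℕ) : ZMod M) = ((i + 1 : ℕ) : ZMod M) := by
        push_cast
        rw [ZMod.natCast_self]
        ring
      rw [this]
    have hn' : n = (n / M) * M := (Nat.div_mul_cancel hM).symm
    calc ∑ i ∈ Finset.range n, ((i + 1 : ℕ) : ZMod M) ^ n
        = ∑ i ∈ Finset.range ((n / M) * M), ((i + 1 : ℕ) : ZMod M) ^ n := by rw [← hn']
      _ = (n / M) • ∑ i ∈ Finset.range M, ((i + 1 : ℕ) : ZMod M) ^ n :=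
          sum_range_mul _ M hper _
      _ = (n / M : ℕ) * ∑ i ∈ Finset.range M, ((i + 1 : ℕ) : ZMod M) ^ n := by
          rw [nsmul_eq_mul]
  -- nonunits have zero n-th power
  have hzero : ∀ x : ZMod M, ¬ IsUnit x → x ^ n = 0 := by
    intro x hx
    have hxval : ((x.val : ℕ) : ZMod M) = x := by
      rw [ZMod.natCast_val, ZMod.cast_id]
    have hld : ℓ ∣ x.val := by
      by_contra hnd
      exact hx (hxval ▸ (ZMod.isUnit_iff_coprime x.val M).mpr
        ((Nat.coprime_comm.mp (hℓ.coprime_iff_not_dvd.mpr hnd)).pow_right k))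
    rw [← hxval, ← Nat.cast_pow, ZMod.natCast_eq_zero_iff]
    exact dvd_trans (pow_dvd_pow ℓ hkn) (pow_dvd_pow_of_dvd hld n)
  -- Step B : S n M ≡ sum over units
  have hB : ((S n M : ℕ) : ZMod M) = ∑ u : (ZMod M)ˣ, (u : ZMod M) ^ n := by
    have hMpos : 0 < M := Nat.pos_of_ne_zero (NeZero.ne M)
    have h1 : ((S n M : ℕ) : ZMod M) = ∑ x : ZMod M, x ^ n := by
      unfold S
      push_cast
      refine Finset.sum_nbij' (fun a => ((a : ℕ) : ZMod M))
        (fun x => if x = 0 then M else x.val) ?_ ?_ ?_ ?_ ?_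
      · intro a _; exact Finset.mem_univ _
      · intro x _
        by_cases hx : x = 0
        · simp only [hx, if_true, Finset.mem_Icc]
          omega
        · simp only [hx, if_false, Finset.mem_Icc]
          exact ⟨Nat.one_le_iff_ne_zero.mpr (fun h => hx ((ZMod.val_eq_zero x).mp h)),
            le_of_lt (ZMod.val_lt x)⟩
      · intro a ha
        rw [Finset.mem_Icc] at ha
        by_cases haM : a = M
        · simp [haM, ZMod.natCast_self]
        · have halt : a < M := lt_of_le_of_ne ha.2 haM
          have : ((a : ℕ) : ZMod M) ≠ 0 := by
            rw [Ne, ZMod.natCast_eq_zero_iff]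
            intro hdvd
            rcases Nat.eq_zero_of_dvd_of_lt hdvd halt with h
            omega
          simp [this, ZMod.val_cast_of_lt halt]
      · intro x _
        by_cases hx : x = 0
        · simp [hx, ZMod.natCast_self]
        · simp [hx, ZMod.natCast_val, ZMod.cast_id]
      · intro a _; rfl
    rw [h1]
    have h2 : ∑ x : ZMod M, x ^ n = ∑ x ∈ Finset.univ.filter (fun x : ZMod M => IsUnit x), x ^ n := by
      symm
      apply Finset.sum_filter_of_ne
      intro x _ hxn
      by_contra hu
      exact hxn (hzero x hu)
    rw [h2]
    symm
    refine Finset.sum_nbij' (fun u : (ZMod M)ˣ => (u : ZMod M))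
      (fun x => if h : IsUnit x then h.unit else 1) ?_ ?_ ?_ ?_ ?_
    · intro u _
      simp [Finset.mem_filter, Units.isUnit]
    · intro x _; exact Finset.mem_univ _
    · intro u _
      have h : IsUnit (u : ZMod M) := u.isUnit
      simp only [h, dif_pos]
      exact Units.ext h.unit_spec
    · intro x hx
      rw [Finset.mem_filter] at hx
      simp only [hx.2, dif_pos]
      exact hx.2.unit_spec
    · intro u _; rfl
  -- T terms other than ℓ vanish
  have hTterm : ∀ q ∈ n.primeFactors.filter (fun q => (q-1) ∣ n), q ≠ ℓ → ((n / q : ℕ) : ZMod M) = 0 := by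
    intro q hq hne
    rw [Finset.mem_filter, Nat.mem_primeFactors] at hq
    obtain ⟨⟨hqp, hqn, _⟩, _⟩ := hq
    rw [ZMod.natCast_eq_zero_iff]
    have hcop : Nat.Coprime M q :=
      (Nat.coprime_pow_left_iff hk _ _).mpr ((Nat.coprime_primes hℓ hqp).mpr (Ne.symm hne))
    obtain ⟨t, ht⟩ := hcop.mul_dvd_of_dvd_of_dvd hM hqn
    refine ⟨t, ?_⟩
    have hqt : n = q * (M * t) := by rw [ht]; ring
    rw [hqt, Nat.mul_div_cancel_left _ hqp.pos]
  by_cases hd1 : (ℓ - 1) ∣ n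
  · -- Euler case
    have hℓn : ℓ ∣ n := dvd_trans (dvd_pow_self ℓ hk.ne') hM
    have hφ : M.totient ∣ n := by
      rw [hMdef, Nat.totient_prime_pow hℓ hk]
      have h1 : ℓ ^ (k-1) ∣ n := dvd_trans (pow_dvd_pow ℓ (Nat.sub_le k 1)) hM
      have hcop : Nat.Coprime (ℓ ^ (k-1)) (ℓ - 1) := by
        apply Nat.Coprime.pow_left
        have h : ℓ - 1 + 1 = ℓ := Nat.succ_pred_eq_of_pos hℓ.pos
        rw [← h]
        unfold Nat.Coprime
        simp
      exact hcop.mul_dvd_of_dvd_of_dvd h1 hd1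
    have hA : ∑ u : (ZMod M)ˣ, (u : ZMod M) ^ n = (M.totient : ZMod M) := by
      have hone : ∀ u : (ZMod M)ˣ, (u : ZMod M) ^ n = 1 := by
        intro u
        obtain ⟨t, ht⟩ := hφ
        rw [← Units.val_pow_eq_pow_val, ht, pow_mul, ZMod.pow_totient, one_pow, Units.val_one]
      rw [Finset.sum_congr rfl (fun u _ => hone u), Finset.sum_const, Finset.card_univ,
        ZMod.card_units_eq_totient, nsmul_eq_mul, mul_one]
    have hℓmem : ℓ ∈ n.primeFactors.filter (fun q => (q-1) ∣ n) := by
      rw [Finset.mem_filter, Nat.mem_primeFactors]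
      exact ⟨⟨hℓ, hℓn, hn.ne'⟩, hd1⟩
    have hT : ((T n : ℕ) : ZMod M) = ((n / ℓ : ℕ) : ZMod M) := by
      unfold T
      rw [← Finset.add_sum_erase _ _ hℓmem]
      push_cast
      rw [add_eq_left]
      apply Finset.sum_eq_zero
      intro q hq
      exact hTterm q (Finset.mem_of_mem_erase hq) (Finset.ne_of_mem_erase hq)
    have hnM : M * (n / M) = n := Nat.mul_div_cancel' hM
    have hk1 : ℓ * ℓ ^ (k-1) = M := by
      rw [hMdef, ← pow_succ']
      congr 1
      omega
    have hnℓ : n / ℓ = ℓ ^ (k-1) * (n / M) := by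
      have h2 : n = ℓ * (ℓ ^ (k-1) * (n / M)) := by rw [← mul_assoc, hk1, hnM]
      conv_lhs => rw [h2]
      rw [Nat.mul_div_cancel_left _ hℓ.pos]
    have hnat : (n / M) * M.totient + n / ℓ = (n / M) * M := by
      rw [Nat.totient_prime_pow hℓ hk, hnℓ, ← hk1]
      obtain ⟨a, ha⟩ : ∃ a, ℓ = a + 1 := ⟨ℓ-1, (Nat.succ_pred_eq_of_pos hℓ.pos).symm⟩
      subst ha
      simp only [Nat.add_sub_cancel]
      ring
    rw [hS, hB, hA, hT]
    calc ((n / M : ℕ) : ZMod M) * (M.totient : ZMod M) + ((n / ℓ : ℕ) : ZMod M)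
        = (((n / M) * M.totient + n / ℓ : ℕ) : ZMod M) := by push_cast; ring
      _ = (((n / M) * M : ℕ) : ZMod M) := by rw [hnat]
      _ = 0 := by push_cast [ZMod.natCast_self]; ring
  · -- geometric case
    haveI : Fact ℓ.Prime := ⟨hℓ⟩
    obtain ⟨c, hc⟩ : ∃ c : (ZMod ℓ)ˣ, c ^ n ≠ 1 := by
      by_contra h
      push_neg at h
      have hexp := Monoid.exponent_dvd_of_forall_pow_eq_one h
      rw [IsCyclic.exponent_eq_card, Nat.card_eq_fintype_card, ZMod.card_units] at hexp
      exact hd1 hexp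
    have hdvdM : ℓ ∣ M := dvd_pow_self ℓ hk.ne'
    obtain ⟨C, hC⟩ := ZMod.unitsMap_surjective hdvdM c
    have hCcast : (ZMod.castHom hdvdM (ZMod ℓ)) (C : ZMod M) = (c : ZMod ℓ) := by
      have := congrArg (Units.val) hC
      rwa [ZMod.unitsMap, Units.coe_map, MonoidHom.coe_coe] at this
    set x : ZMod M := (C : ZMod M) ^ n - 1 with hx
    have hximg : (ZMod.castHom hdvdM (ZMod ℓ)) x ≠ 0 := by
      rw [hx, map_sub, map_pow, map_one, hCcast]
      intro h
      apply hc
      have h2 : ((c : ZMod ℓ))^n = 1 := sub_eq_zero.mp h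
      rw [← Units.val_pow_eq_pow_val] at h2
      exact Units.ext h2
    have hxunit : IsUnit x := by
      have hxval : ((x.val : ℕ) : ZMod M) = x := by rw [ZMod.natCast_val, ZMod.cast_id]
      rw [← hxval, ZMod.isUnit_iff_coprime]
      show Nat.Coprime x.val (ℓ ^ k)
      apply Nat.Coprime.pow_right
      rw [Nat.coprime_comm, hℓ.coprime_iff_not_dvd]
      intro hdvd
      apply hximg
      have h3 : (ZMod.castHom hdvdM (ZMod ℓ)) x = ((x.val : ℕ) : ZMod ℓ) := by
        rw [ZMod.castHom_apply, ← ZMod.natCast_val]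
      rw [h3, ZMod.natCast_eq_zero_iff]
      exact hdvd
    have hA0 : ∑ u : (ZMod M)ˣ, (u : ZMod M) ^ n = 0 := by
      set A := ∑ u : (ZMod M)ˣ, (u : ZMod M) ^ n with hAdef
      have hre : A = ∑ u : (ZMod M)ˣ, ((C * u : (ZMod M)ˣ) : ZMod M) ^ n :=
        Fintype.sum_equiv (Equiv.mulLeft C) _ _ (fun u => rfl) |>.symm
      have hmul : ((C : ZMod M)^n) * A = A := by
        conv_rhs => rw [hre]
        rw [Finset.mul_sum]
        refine Finset.sum_congr rfl fun u _ => ?_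
        rw [Units.val_mul, mul_pow]
      have h0 : x * A = x * 0 := by
        rw [hx, sub_mul, hmul, one_mul, sub_self, mul_zero]
      exact hxunit.mul_left_cancel h0
    have hT0 : ((T n : ℕ) : ZMod M) = 0 := by
      unfold T
      push_cast
      apply Finset.sum_eq_zero
      intro q hq
      refine hTterm q hq fun he => ?_
      rw [Finset.mem_filter] at hq
      exact absurd (he ▸ hq.2) hd1
    rw [hS, hB, hA0, hT0, mul_zero, add_zero]

lemma S_pos (n : ℕ) (hn : 0 < n) : 0 < S n n := by
  unfold S
  apply Finset.sum_pos
  · intro i hi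
    rw [Finset.mem_Icc] at hi
    exact pow_pos hi.1 n
  · exact ⟨1, Finset.mem_Icc.mpr ⟨le_refl 1, hn⟩⟩

lemma factF (n : ℕ) (hn : 0 < n) : n ∣ S n n + T n := by
  have hX : S n n + T n ≠ 0 := Nat.add_pos_left (S_pos n hn) _ |>.ne'
  rw [← Nat.factorization_le_iff_dvd hn.ne' hX, Finsupp.le_def]
  intro ℓ
  by_cases h0 : n.factorization ℓ = 0
  · simp [h0]
  · have hmem : ℓ ∈ n.primeFactors := by
      rw [← Nat.support_factorization]
      exact Finsupp.mem_support_iff.mpr h0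
    have hℓ : ℓ.Prime := Nat.prime_of_mem_primeFactors hmem
    have hk : 0 < n.factorization ℓ := Nat.pos_of_ne_zero h0
    have hkey := keyLocal n ℓ _ hℓ hk (Nat.ordProj_dvd n ℓ) hn
    exact (hℓ.pow_dvd_iff_le_factorization hX).mp hkey

set_option maxRecDepth 10000 in
lemma prime_mem_chain (n : ℕ) (hsq : Squarefree n)
    (h : ∀ q, q.Prime → q ∣ n → (q - 1) ∣ n) :
    ∀ q, q.Prime → q ∣ n → q ∈ ({2, 3, 7, 43} : Finset ℕ) := by
  intro q
  induction q using Nat.strong_induction_on with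
  | _ q ih =>
    intro hq hqn
    have hd : (q - 1) ∣ n := h q hq hqn
    have hdsq : Squarefree (q - 1) := hsq.squarefree_of_dvd hd
    have hq1pos : 0 < q - 1 := by have := hq.two_le; omega
    have hsub : (q-1).primeFactors ⊆ ({2,3,7,43} : Finset ℕ) := by
      intro r hr
      rw [Nat.mem_primeFactors] at hr
      obtain ⟨hrp, hrd, _⟩ := hr
      have hrn : r ∣ n := hrd.trans hd
      have hrlt : r < q := lt_of_le_of_lt (Nat.le_of_dvd hq1pos hrd) (by have := hq.two_le; omega)
      exact ih r hrlt hrp hrn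
    have hdd : (q - 1) ∣ 1806 := by
      conv_lhs => rw [← Nat.prod_primeFactors_of_squarefree hdsq]
      have h2 := Finset.prod_dvd_prod_of_subset _ _ (fun r => r) hsub
      have h3 : (∏ r ∈ ({2,3,7,43} : Finset ℕ), r) = 1806 := by decide
      rwa [h3] at h2
    obtain ⟨d, hd'⟩ : ∃ d, q = d + 1 := ⟨q - 1, by omega⟩
    subst hd'
    simp only [Nat.add_sub_cancel] at hdd
    have hdm : d ∈ ({1, 2, 3, 6, 7, 14, 21, 42, 43, 86, 129, 258, 301, 602, 903, 1806} : Finset ℕ) := by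
      rw [← show Nat.divisors 1806 = {1, 2, 3, 6, 7, 14, 21, 42, 43, 86, 129, 258, 301, 602, 903, 1806} from by decide]
      exact Nat.mem_divisors.mpr ⟨hdd, by norm_num⟩
    fin_cases hdm <;> first
      | decide
      | (exact absurd hq (by norm_num))

set_option maxRecDepth 10000 in
lemma chain (n : ℕ) (hn : 0 < n) (hsq : Squarefree n)
    (h : ∀ q, q.Prime → q ∣ n → (q - 1) ∣ n) :
    n = 1 ∨ n = 2 ∨ n = 6 ∨ n = 42 ∨ n = 1806 := by
  have hsub : n.primeFactors ⊆ ({2,3,7,43} : Finset ℕ) := by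
    intro r hr
    rw [Nat.mem_primeFactors] at hr
    exact prime_mem_chain n hsq h r hr.1 hr.2.1
  have hdvd : n ∣ 1806 := by
    conv_lhs => rw [← Nat.prod_primeFactors_of_squarefree hsq]
    have h2 := Finset.prod_dvd_prod_of_subset _ _ (fun r => r) hsub
    have h3 : (∏ r ∈ ({2,3,7,43} : Finset ℕ), r) = 1806 := by decide
    rwa [h3] at h2
  have hmem : n ∈ ({1, 2, 3, 6, 7, 14, 21, 42, 43, 86, 129, 258, 301, 602, 903, 1806} : Finset ℕ) := by
    rw [← show Nat.divisors 1806 = {1, 2, 3, 6, 7, 14, 21, 42, 43, 86, 129, 258, 301, 602, 903, 1806} from by decide]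
    exact Nat.mem_divisors.mpr ⟨hdvd, by norm_num⟩
  fin_cases hmem <;> first
    | decide
    | (refine absurd (h 3 ?_ ?_) ?_ <;> decide)
    | (refine absurd (h 7 ?_ ?_) ?_ <;> decide)
    | (refine absurd (h 43 ?_ ?_) ?_ <;> decide)

/-- The set `𝒲` of weak primary pseudoperfect numbers: positive integers `n` with
`∑_{p ∣ n, p prime} n/p + 1 ≡ 0 (mod n)`. -/
def W : Set ℕ := {n : ℕ | 0 < n ∧ n ∣ (∑ q ∈ n.primeFactors, n / q) + 1}

/-- For every prime `p`, `M_p ⊆ M_1 ∪ p·𝒲` where `M_1 = {1, 2, 6, 42, 1806}`. -/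
theorem stmt_13 (p : ℕ) (hp : p.Prime) :
    {n : ℕ | 0 < n ∧ S n n ≡ p [MOD n]} ⊆
      ({1, 2, 6, 42, 1806} : Set ℕ) ∪ (fun x => p * x) '' W := by
  intro n hn
  obtain ⟨hn0, hmod⟩ := hn
  have hF : n ∣ S n n + T n := factF n hn0
  have hd : n ∣ p + T n := by
    have h1 : p + T n ≡ S n n + T n [MOD n] := (hmod.add_right (T n)).symm
    have h2 : S n n + T n ≡ 0 [MOD n] := Nat.modEq_zero_iff_dvd.mpr hF
    exact Nat.modEq_zero_iff_dvd.mp (h1.trans h2)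
  have Hdiv : ∀ ℓ k q : ℕ, ℓ.Prime → 0 < k → ℓ^k ∣ n → q.Prime → q ∣ n → q ≠ ℓ → ℓ^k ∣ n / q := by
    intro ℓ k q hℓ hk hM hq hqn hne
    have hcop : Nat.Coprime (ℓ^k) q :=
      (Nat.coprime_pow_left_iff hk _ _).mpr ((Nat.coprime_primes hℓ hq).mpr (Ne.symm hne))
    obtain ⟨t, ht⟩ := hcop.mul_dvd_of_dvd_of_dvd hM hqn
    refine ⟨t, ?_⟩
    rw [show n = q * (ℓ^k * t) by rw [ht]; ring, Nat.mul_div_cancel_left _ hq.pos]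
  have L1 : ∀ ℓ k : ℕ, ℓ.Prime → 0 < k → ℓ^k ∣ n → ¬((ℓ-1) ∣ n) → ℓ^k ∣ p := by
    intro ℓ k hℓ hk hM hnd
    have hT : ℓ^k ∣ T n := by
      apply Finset.dvd_sum
      intro q hq
      rw [Finset.mem_filter, Nat.mem_primeFactors] at hq
      refine Hdiv ℓ k q hℓ hk hM hq.1.1 hq.1.2.1 fun he => hnd (he ▸ hq.2)
    have h3 : ℓ^k ∣ p + T n := hM.trans hd
    have h4 := Nat.dvd_sub h3 hT
    rwa [Nat.add_sub_cancel] at h4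
  have L2 : ∀ ℓ k : ℕ, ℓ.Prime → 0 < k → ℓ^k ∣ n → (ℓ-1) ∣ n → ℓ^k ∣ p + n / ℓ := by
    intro ℓ k hℓ hk hM hdv
    have hℓn : ℓ ∣ n := (dvd_pow_self ℓ hk.ne').trans hM
    have hmem : ℓ ∈ n.primeFactors.filter (fun q => (q-1) ∣ n) := by
      rw [Finset.mem_filter, Nat.mem_primeFactors]
      exact ⟨⟨hℓ, hℓn, hn0.ne'⟩, hdv⟩
    have hsplit : T n = n / ℓ + ∑ q ∈ (n.primeFactors.filter (fun q => (q-1) ∣ n)).erase ℓ, n / q := by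
      unfold T
      rw [← Finset.add_sum_erase _ _ hmem]
    have hrest : ℓ^k ∣ ∑ q ∈ (n.primeFactors.filter (fun q => (q-1) ∣ n)).erase ℓ, n / q := by
      apply Finset.dvd_sum
      intro q hq
      have hq' := Finset.mem_of_mem_erase hq
      rw [Finset.mem_filter, Nat.mem_primeFactors] at hq'
      exact Hdiv ℓ k q hℓ hk hM hq'.1.1 hq'.1.2.1 (Finset.ne_of_mem_erase hq)
    have h3 : ℓ^k ∣ (p + n/ℓ) + ∑ q ∈ (n.primeFactors.filter (fun q => (q-1) ∣ n)).erase ℓ, n / q := by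
      have heq : (p + n/ℓ) + ∑ q ∈ (n.primeFactors.filter (fun q => (q-1) ∣ n)).erase ℓ, n / q = p + T n := by
        rw [hsplit]; ring
      rw [heq]
      exact hM.trans hd
    have h4 := Nat.dvd_sub h3 hrest
    rwa [Nat.add_sub_cancel] at h4
  have Hq1 : ∀ q : ℕ, q.Prime → q ∣ n → q ≠ p → (q - 1) ∣ n := by
    intro q hq hqn hne
    by_contra hnd
    have h1 := L1 q 1 hq one_pos (by rwa [pow_one]) hnd
    rw [pow_one] at h1
    exact hne ((Nat.prime_dvd_prime_iff_eq hq hp).mp h1)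
  by_cases hpn : p ∣ n
  · right
    set m := n / p with hm
    have hnm : n = p * m := (Nat.mul_div_cancel' hpn).symm
    have hm0 : 0 < m := Nat.pos_of_ne_zero (fun h => hn0.ne' (by rw [hnm, h, mul_zero]))
    have hfil : n.primeFactors.filter (fun q => (q-1) ∣ n) = m.primeFactors := by
      ext q
      simp only [Finset.mem_filter, Nat.mem_primeFactors]
      constructor
      · rintro ⟨⟨hq, hqn, _⟩, hq1⟩
        refine ⟨hq, ?_, hm0.ne'⟩
        by_cases hqp : q = p
        · subst hqp
          have h1 := L2 q 1 hq one_pos (by rwa [pow_one]) hq1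
          rw [pow_one] at h1
          have h4 : q ∣ n / q := (Nat.dvd_add_right (dvd_refl q)).mp h1
          rwa [← hm] at h4
        · rcases (hq.dvd_mul.mp (hnm ▸ hqn)) with h | h
          · exact absurd ((Nat.prime_dvd_prime_iff_eq hq hp).mp h) hqp
          · exact h
      · rintro ⟨hq, hqm, _⟩
        have hqn : q ∣ n := by rw [hnm]; exact hqm.mul_left p
        refine ⟨⟨hq, hqn, hn0.ne'⟩, ?_⟩
        by_cases hqp : q = p
        · subst hqp
          by_contra hnd
          have h2 : q^2 ∣ n := by
            rw [hnm, pow_two]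
            exact Nat.mul_dvd_mul_left q hqm
          have h3 := L1 q 2 hq two_pos h2 hnd
          have hle := Nat.le_of_dvd hp.pos h3
          nlinarith [hq.two_le]
        · exact Hq1 q hq hqn hqp
    have hTm : T n = p * ∑ q ∈ m.primeFactors, m / q := by
      unfold T
      rw [hfil, Finset.mul_sum]
      refine Finset.sum_congr rfl fun q hq => ?_
      have hqm : q ∣ m := Nat.dvd_of_mem_primeFactors hq
      rw [hnm, Nat.mul_div_assoc p hqm]
    have hdm : m ∣ (∑ q ∈ m.primeFactors, m / q) + 1 := by
      have h5 : p * m ∣ p * ((∑ q ∈ m.primeFactors, m / q) + 1) := by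
        rw [mul_add, mul_one, ← hTm, ← hnm]
        rwa [Nat.add_comm] at hd
      exact (Nat.mul_dvd_mul_iff_left hp.pos).mp h5
    exact ⟨m, ⟨hm0, hdm⟩, hnm.symm⟩
  · left
    have hsf : Squarefree n := by
      rw [Nat.squarefree_iff_prime_squarefree]
      intro q hq hq2
      have hqn : q ∣ n := (dvd_mul_right q q).trans hq2
      have hqp : q ≠ p := fun h => hpn (h ▸ hqn)
      have hqdvq : q ∣ n / q := by
        obtain ⟨t, ht⟩ := hq2
        refine ⟨t, ?_⟩
        rw [show n = q * (q * t) by rw [ht]; ring, Nat.mul_div_cancel_left _ hq.pos]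
      by_cases hq1 : (q-1) ∣ n
      · have h1 := L2 q 2 hq two_pos (by rwa [pow_two]) hq1
        have h6 : q ∣ p + n/q := (dvd_pow_self q two_ne_zero).trans h1
        have h7 := Nat.dvd_sub h6 hqdvq
        rw [Nat.add_sub_cancel] at h7
        exact hqp ((Nat.prime_dvd_prime_iff_eq hq hp).mp h7)
      · have h1 := L1 q 1 hq one_pos (by rwa [pow_one]) hq1
        rw [pow_one] at h1
        exact hqp ((Nat.prime_dvd_prime_iff_eq hq hp).mp h1)
    have hall : ∀ q, q.Prime → q ∣ n → (q-1) ∣ n :=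
      fun q hq hqn => Hq1 q hq hqn (fun h => hpn (h ▸ hqn))
    rcases chain n hn0 hsf hall with h|h|h|h|h <;> subst h <;> simp
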